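/- If F₀ = F̄_A where F̄_A(p_L,p_R) = max(A, H_L⁺(p_L), H_R⁻(p_R)) for some A ∈ [H₀,0], then the flux limiter A_{F₀} constructed from F₀ equals A; that is, there exists (p̄_L,p̄_R) with A = F̄_A(p̄_L,p̄_R) = H_R⁺(p̄_R) = H_L⁻(p̄_L), and A is the unique such value. -/
import Mathlib


open Set

/-- If $F_0 = \bar F_A$ for some $A \in [H_0,0]$, then the flux limiter $A_{F_0}$ equals $A$. -/
theorem flux_limiter_of_FA
    (aL bL cL aR bR cR δ : ℝ)
    (HL HR : ℝ → ℝ)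
    (haL : aL < bL) (hbL : bL < cL) (haR : aR < bR) (hbR : bR < cR)
    (hδ : 0 < δ)
    (hCL : ContDiffOn ℝ 2 HL (Icc aL cL)) (hCR : ContDiffOn ℝ 2 HR (Icc aR cR))
    (hconvL : ∀ x ∈ Icc aL cL, δ ≤ deriv (deriv HL) x)
    (hconvR : ∀ x ∈ Icc aR cR, δ ≤ deriv (deriv HR) x)
    (hdecL : StrictAntiOn HL (Icc aL bL)) (hincL : StrictMonoOn HL (Icc bL cL))
    (hdecR : StrictAntiOn HR (Icc aR bR)) (hincR : StrictMonoOn HR (Icc bR cR))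
    (hminL : ∀ p ∈ Icc aL cL, HL bL ≤ HL p) (hminR : ∀ p ∈ Icc aR cR, HR bR ≤ HR p)
    (h0La : HL aL = 0) (h0Lc : HL cL = 0) (h0Ra : HR aR = 0) (h0Rc : HR cR = 0)
    (A : ℝ) (hA : A ∈ Icc (max (HL bL) (HR bR)) 0) :
    (∃ pL pR : ℝ, pL ∈ Icc aL cL ∧ pR ∈ Icc aR cR ∧
        A = max (max A (HL (max pL bL))) (HR (min pR bR)) ∧
        A = HR (max pR bR) ∧ A = HL (min pL bL)) ∧
    (∀ lam pL pR : ℝ, pL ∈ Icc aL cL → pR ∈ Icc aR cR →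
        lam = max (max A (HL (max pL bL))) (HR (min pR bR)) →
        lam = HR (max pR bR) → lam = HL (min pL bL) → lam = A) := by
  obtain ⟨hAlo, hA0⟩ := hA
  have hLbA : HL bL ≤ A := le_trans (le_max_left _ _) hAlo
  have hRbA : HR bR ≤ A := le_trans (le_max_right _ _) hAlo
  constructor
  · have hcontL : ContinuousOn HL (Icc aL bL) :=
      hCL.continuousOn.mono (Icc_subset_Icc le_rfl hbL.le)
    have hcontR : ContinuousOn HR (Icc bR cR) :=
      hCR.continuousOn.mono (Icc_subset_Icc haR.le le_rfl)
    have h1 : A ∈ Icc (HL bL) (HL aL) := ⟨hLbA, by rw [h0La]; exact hA0⟩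
    obtain ⟨pL, hpLmem, hpLA⟩ := intermediate_value_Icc' haL.le hcontL h1
    have h2 : A ∈ Icc (HR bR) (HR cR) := ⟨hRbA, by rw [h0Rc]; exact hA0⟩
    obtain ⟨pR, hpRmem, hpRA⟩ := intermediate_value_Icc hbR.le hcontR h2
    refine ⟨pL, pR, ⟨hpLmem.1, hpLmem.2.trans hbL.le⟩,
      ⟨haR.le.trans hpRmem.1, hpRmem.2⟩, ?_, ?_, ?_⟩
    · rw [max_eq_right hpLmem.2, min_eq_right hpRmem.1,
        max_eq_left hLbA, max_eq_left hRbA]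
    · rw [max_eq_left hpRmem.1]; exact hpRA.symm
    · rw [min_eq_left hpLmem.2]; exact hpLA.symm
  · intro lam pL pR hpL hpR hlam hlamR hlamL
    have hge : A ≤ lam := hlam ▸ le_trans (le_max_left _ _) (le_max_left _ _)
    by_contra hne
    have hgt : A < lam := lt_of_le_of_ne hge (fun h => hne h.symm)
    rcases max_cases (max A (HL (max pL bL))) (HR (min pR bR)) with ⟨he, _⟩ | ⟨he, _⟩
    · rw [he] at hlam
      rcases max_cases A (HL (max pL bL)) with ⟨he2, _⟩ | ⟨he2, _⟩
      · exact hne (hlam.trans he2)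
      · have hlamb : lam = HL bL := by
          rcases le_total pL bL with h | h
          · rw [hlam, he2, max_eq_right h]
          · rw [hlamL, min_eq_right h]
        exact absurd (hlamb ▸ hLbA) (not_le_of_gt hgt)
    · have hlamb : lam = HR bR := by
        rcases le_total pR bR with h | h
        · rw [hlamR, max_eq_right h]
        · rw [hlam, he, min_eq_right h]
      exact absurd (hlamb ▸ hRbA) (not_le_of_gt hgt)
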